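/- Let n ≥ 1 be an integer and let p, q, r be three pairwise distinct points of ℝ² all of whose coordinates are integers in {0, 1, …, n−1}. If q does not lie on the segment [p, r], then the Euclidean distance from q to the segment [p, r] is at least 1/(√2 · n). -/

import Mathlib

private lemma natsq_one_le (k l : ℕ) (h : k ≠ l) : (1:ℝ) ≤ ((k:ℝ) - l)^2 := by
  have h1 : (1:ℤ) ≤ |(k:ℤ) - l| := Int.one_le_abs (sub_ne_zero.2 (by exact_mod_cast h))
  have h2 : (1:ℝ) ≤ |(k:ℝ) - l| := by exact_mod_cast h1
  nlinarith [sq_abs ((k:ℝ) - l), abs_nonneg ((k:ℝ) - l)]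

private lemma collin_aux (u0 u1 a0 a1 : ℝ) (h : u0 ≠ 0 ∨ u1 ≠ 0)
    (hdet : u0 * a1 - u1 * a0 = 0) : ∃ s, a0 = s * u0 ∧ a1 = s * u1 := by
  rcases h with h | h
  · refine ⟨a0 / u0, (div_mul_cancel₀ a0 h).symm, ?_⟩
    rw [div_mul_eq_mul_div, eq_comm, div_eq_iff h]
    linear_combination -hdet
  · refine ⟨a1 / u1, ?_, (div_mul_cancel₀ a1 h).symm⟩
    rw [div_mul_eq_mul_div, eq_comm, div_eq_iff h]
    linear_combination hdet

private lemma fin2_cases (i : Fin 2) : i = 0 ∨ i = 1 := by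
  revert i; decide

set_option maxHeartbeats 1000000 in
/-- Lemma 2 of the paper: a grid point not on a segment between grid points
is at Euclidean distance at least `1 / (√2 · n)` from the segment. -/
theorem stmt0 (n : ℕ) (hn : 1 ≤ n) (p q r : EuclideanSpace ℝ (Fin 2))
    (hp : ∀ i, ∃ k : ℕ, k < n ∧ p i = k)
    (hq : ∀ i, ∃ k : ℕ, k < n ∧ q i = k)
    (hr : ∀ i, ∃ k : ℕ, k < n ∧ r i = k)
    (hpq : p ≠ q) (hpr : p ≠ r) (hqr : q ≠ r)
    (hseg : q ∉ segment ℝ p r) :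
    1 / (Real.sqrt 2 * n) ≤ Metric.infDist q (segment ℝ p r) := by
  obtain ⟨P0, hP0n, hp0⟩ := hp 0
  obtain ⟨P1, hP1n, hp1⟩ := hp 1
  obtain ⟨Q0, hQ0n, hq0⟩ := hq 0
  obtain ⟨Q1, hQ1n, hq1⟩ := hq 1
  obtain ⟨R0, hR0n, hr0⟩ := hr 0
  obtain ⟨R1, hR1n, hr1⟩ := hr 1
  have hn1 : (1:ℝ) ≤ n := by exact_mod_cast hn
  have hnpos : (0:ℝ) < n := by linarith
  have hs2 : (0:ℝ) < Real.sqrt 2 := Real.sqrt_pos.2 (by norm_num)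
  have hs2sq : Real.sqrt 2 ^ 2 = 2 := Real.sq_sqrt (by norm_num)
  have hs2one : (1:ℝ) ≤ Real.sqrt 2 := by
    rw [show (1:ℝ) = Real.sqrt 1 by simp]
    exact Real.sqrt_le_sqrt (by norm_num)
  have hden : (0:ℝ) < Real.sqrt 2 * n := by positivity
  -- coordinate bounds
  have bP0 : (P0:ℝ) + 1 ≤ n := by exact_mod_cast hP0n
  have bP1 : (P1:ℝ) + 1 ≤ n := by exact_mod_cast hP1n
  have bQ0 : (Q0:ℝ) + 1 ≤ n := by exact_mod_cast hQ0n
  have bQ1 : (Q1:ℝ) + 1 ≤ n := by exact_mod_cast hQ1n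
  have bR0 : (R0:ℝ) + 1 ≤ n := by exact_mod_cast hR0n
  have bR1 : (R1:ℝ) + 1 ≤ n := by exact_mod_cast hR1n
  have nnP0 : (0:ℝ) ≤ P0 := Nat.cast_nonneg _
  have nnP1 : (0:ℝ) ≤ P1 := Nat.cast_nonneg _
  have nnQ0 : (0:ℝ) ≤ Q0 := Nat.cast_nonneg _
  have nnQ1 : (0:ℝ) ≤ Q1 := Nat.cast_nonneg _
  have nnR0 : (0:ℝ) ≤ R0 := Nat.cast_nonneg _
  have nnR1 : (0:ℝ) ≤ R1 := Nat.cast_nonneg _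
  obtain ⟨u0, hu0def⟩ : ∃ u0 : ℝ, u0 = (R0:ℝ) - P0 := ⟨_, rfl⟩
  obtain ⟨u1, hu1def⟩ : ∃ u1 : ℝ, u1 = (R1:ℝ) - P1 := ⟨_, rfl⟩
  -- u bound
  have hu0b : u0^2 ≤ ((n:ℝ) - 1)^2 := sq_le_sq' (by linarith) (by linarith)
  have hu1b : u1^2 ≤ ((n:ℝ) - 1)^2 := sq_le_sq' (by linarith) (by linarith)
  have husq : u0^2 + u1^2 ≤ 2 * (n:ℝ)^2 := by
    have hnn : ((n:ℝ) - 1)^2 ≤ (n:ℝ)^2 := pow_le_pow_left₀ (by linarith) (by linarith) 2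
    linarith
  -- lattice distinctness lemmas
  have hQP : (1:ℝ) ≤ ((Q0:ℝ) - P0)^2 + ((Q1:ℝ) - P1)^2 := by
    have : P0 ≠ Q0 ∨ P1 ≠ Q1 := by
      by_contra h
      push_neg at h
      apply hpq
      ext i
      rcases fin2_cases i with rfl | rfl
      · rw [hp0, hq0, h.1]
      · rw [hp1, hq1, h.2]
    rcases this with h | h
    · linarith [natsq_one_le Q0 P0 (Ne.symm h), sq_nonneg ((Q1:ℝ) - P1)]
    · linarith [natsq_one_le Q1 P1 (Ne.symm h), sq_nonneg ((Q0:ℝ) - P0)]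
  have hQR : (1:ℝ) ≤ ((Q0:ℝ) - R0)^2 + ((Q1:ℝ) - R1)^2 := by
    have : Q0 ≠ R0 ∨ Q1 ≠ R1 := by
      by_contra h
      push_neg at h
      apply hqr
      ext i
      rcases fin2_cases i with rfl | rfl
      · rw [hq0, hr0, h.1]
      · rw [hq1, hr1, h.2]
    rcases this with h | h
    · linarith [natsq_one_le Q0 R0 h, sq_nonneg ((Q1:ℝ) - R1)]
    · linarith [natsq_one_le Q1 R1 h, sq_nonneg ((Q0:ℝ) - R0)]
  have hPRne : u0 ≠ 0 ∨ u1 ≠ 0 := by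
    by_contra h
    push_neg at h
    apply hpr
    have e0 : (P0:ℝ) = R0 := by
      have := h.1; rw [hu0def] at this; linarith
    have e1 : (P1:ℝ) = R1 := by
      have := h.2; rw [hu1def] at this; linarith
    ext i
    rcases fin2_cases i with rfl | rfl
    · rw [hp0, hr0]; exact e0
    · rw [hp1, hr1]; exact e1
  -- the main pointwise bound
  have key : ∀ x ∈ segment ℝ p r, 1 / (Real.sqrt 2 * n) ≤ dist q x := by
    rintro x ⟨A, B, hA, hB, hAB, rfl⟩
    have hxy0 : (A • p + B • r) 0 = A * P0 + B * R0 := by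
      simp [PiLp.add_apply, PiLp.smul_apply, hp0, hr0, smul_eq_mul]
    have hxy1 : (A • p + B • r) 1 = A * P1 + B * R1 := by
      simp [PiLp.add_apply, PiLp.smul_apply, hp1, hr1, smul_eq_mul]
    obtain ⟨v0, hv0def⟩ : ∃ v0 : ℝ, v0 = (Q0:ℝ) - (A * P0 + B * R0) := ⟨_, rfl⟩
    obtain ⟨v1, hv1def⟩ : ∃ v1 : ℝ, v1 = (Q1:ℝ) - (A * P1 + B * R1) := ⟨_, rfl⟩
    have hdist : dist q (A • p + B • r) = Real.sqrt (v0^2 + v1^2) := by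
      rw [EuclideanSpace.dist_eq, Fin.sum_univ_two, Real.dist_eq, Real.dist_eq,
        sq_abs, sq_abs, hxy0, hxy1, hq0, hq1, ← hv0def, ← hv1def]
    rw [hdist]
    have hvnn : (0:ℝ) ≤ v0^2 + v1^2 := by positivity
    -- determinant
    obtain ⟨D, hDdef⟩ : ∃ D : ℤ, D = ((R0:ℤ) - P0) * ((Q1:ℤ) - P1) - ((R1:ℤ) - P1) * ((Q0:ℤ) - P0) :=
      ⟨_, rfl⟩
    have hDcast : (D:ℝ) = u0 * ((Q1:ℝ) - P1) - u1 * ((Q0:ℝ) - P0) := by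
      rw [hDdef, hu0def, hu1def]; push_cast; ring
    by_cases hD : D = 0
    · -- collinear case
      have hdet0 : u0 * ((Q1:ℝ) - P1) - u1 * ((Q0:ℝ) - P0) = 0 := by
        rw [← hDcast, hD]; norm_num
      obtain ⟨s, hsa, hsb⟩ := collin_aux u0 u1 ((Q0:ℝ) - P0) ((Q1:ℝ) - P1) hPRne hdet0
      have hsout : s < 0 ∨ 1 < s := by
        by_contra hcon
        push_neg at hcon
        apply hseg
        refine ⟨1 - s, s, by linarith [hcon.1], hcon.1, by ring, ?_⟩
        have h0 : ((1 - s) • p + s • r) 0 = (1 - s) * P0 + s * R0 := by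
          simp [PiLp.add_apply, PiLp.smul_apply, hp0, hr0, smul_eq_mul]
        have h1 : ((1 - s) • p + s • r) 1 = (1 - s) * P1 + s * R1 := by
          simp [PiLp.add_apply, PiLp.smul_apply, hp1, hr1, smul_eq_mul]
        ext i
        rcases fin2_cases i with rfl | rfl
        · rw [h0, hq0]
          have hu := hsa; rw [hu0def] at hu
          linarith
        · rw [h1, hq1]
          have hu := hsb; rw [hu1def] at hu
          linarith
      have hA' : A = 1 - B := by linarith
      have hv0 : v0 = (s - B) * u0 := by
        rw [hv0def, hA']
        linear_combination hsa + B * hu0def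
      have hv1 : v1 = (s - B) * u1 := by
        rw [hv1def, hA']
        linear_combination hsb + B * hu1def
      have hone : (1:ℝ) ≤ v0^2 + v1^2 := by
        rcases hsout with hs | hs
        · have h1 : s^2 * (u0^2 + u1^2) = ((Q0:ℝ) - P0)^2 + ((Q1:ℝ) - P1)^2 := by
            rw [hsa, hsb]; ring
          have h2 : s^2 ≤ (s - B)^2 := by
            rw [show (s - B)^2 = (B - s)^2 by ring]
            exact sq_le_sq' (by linarith) (by linarith)
          have hun : (0:ℝ) ≤ u0^2 + u1^2 := by positivity
          have hmono : s^2 * (u0^2 + u1^2) ≤ (s - B)^2 * (u0^2 + u1^2) :=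
            mul_le_mul_of_nonneg_right h2 hun
          rw [hv0, hv1]
          have hfact : ((s - B) * u0)^2 + ((s - B) * u1)^2 = (s - B)^2 * (u0^2 + u1^2) := by ring
          linarith
        · have h1 : (s-1)^2 * (u0^2 + u1^2) = ((Q0:ℝ) - R0)^2 + ((Q1:ℝ) - R1)^2 := by
            have e0 : (Q0:ℝ) - R0 = (s - 1) * u0 := by
              have hu := hsa; rw [hu0def] at hu; rw [hu0def]; linarith
            have e1 : (Q1:ℝ) - R1 = (s - 1) * u1 := by
              have hu := hsb; rw [hu1def] at hu; rw [hu1def]; linarith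
            rw [e0, e1]; ring
          have h2 : (s-1)^2 ≤ (s - B)^2 :=
            pow_le_pow_left₀ (by linarith) (by linarith) 2
          have hun : (0:ℝ) ≤ u0^2 + u1^2 := by positivity
          have hmono : (s-1)^2 * (u0^2 + u1^2) ≤ (s - B)^2 * (u0^2 + u1^2) :=
            mul_le_mul_of_nonneg_right h2 hun
          rw [hv0, hv1]
          have hfact : ((s - B) * u0)^2 + ((s - B) * u1)^2 = (s - B)^2 * (u0^2 + u1^2) := by ring
          linarith
      have hsq1 : (1:ℝ) ≤ Real.sqrt (v0^2 + v1^2) := by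
        rw [show (1:ℝ) = Real.sqrt 1 by simp]
        exact Real.sqrt_le_sqrt hone
      have hle1 : 1 / (Real.sqrt 2 * n) ≤ 1 := by
        rw [div_le_one hden]
        have := mul_le_mul hs2one hn1 (by norm_num) (by linarith)
        linarith
      linarith
    · -- non-collinear case
      have hD1 : (1:ℝ) ≤ (D:ℝ)^2 := by
        have hz : (1:ℤ) ≤ |D| := Int.one_le_abs hD
        have h2 : (1:ℝ) ≤ |(D:ℝ)| := by exact_mod_cast hz
        have h3 : (1:ℝ)^2 ≤ |(D:ℝ)|^2 := pow_le_pow_left₀ (by norm_num) h2 2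
        rw [one_pow, sq_abs] at h3
        exact h3
      have hdetv : u0 * v1 - u1 * v0 = (D:ℝ) := by
        rw [hDcast, hv0def, hv1def, hu0def, hu1def]
        have hA' : A = 1 - B := by linarith
        rw [hA']; ring
      have hCS : (u0 * v1 - u1 * v0)^2 ≤ (u0^2 + u1^2) * (v0^2 + v1^2) := by
        linarith [sq_nonneg (u0 * v0 + u1 * v1)]
      have hchain : (1:ℝ) ≤ 2 * (n:ℝ)^2 * (v0^2 + v1^2) := by
        have h3 : (u0^2 + u1^2) * (v0^2 + v1^2) ≤ 2 * (n:ℝ)^2 * (v0^2 + v1^2) :=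
          mul_le_mul_of_nonneg_right husq hvnn
        rw [hdetv] at hCS
        linarith
      apply Real.le_sqrt_of_sq_le
      rw [div_pow, one_pow, mul_pow, hs2sq]
      rw [div_le_iff₀ (by positivity)]
      linarith [hchain]
  have hne : (segment ℝ p r).Nonempty := ⟨p, left_mem_segment ℝ p r⟩
  haveI : Nonempty (segment ℝ p r) := hne.to_subtype
  rw [Metric.infDist_eq_iInf]
  exact le_ciInf fun y => key y y.2
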